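/- Let N and m be integers with 1 ≤ m ≤ N, and let T be the N-regular rooted tree. Let S be a subtree of T. Suppose that for every m-regular subtree R of T, the intersection S ∩ R is infinite. Then there exists a subset S′ ⊆ S which is itself a subtree of T and is (N − m + 1)-regular. -/

import Mathlib

/-- A subtree of the `N`-regular rooted tree (modelled as the set of all finite
words over `Fin N`): a set of words containing the empty word and closed under
taking prefixes. -/
def IsSubtree {N : ℕ} (S : Set (List (Fin N))) : Prop :=
  [] ∈ S ∧ ∀ w ∈ S, ∀ v : List (Fin N), v <+: w → v ∈ S

/-- A subtree is `k`-regular if every word in it has exactly `k` successors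
(one-letter extensions) in it. -/
def IsRegularSubtree {N : ℕ} (k : ℕ) (S : Set (List (Fin N))) : Prop :=
  IsSubtree S ∧ ∀ w ∈ S, {a : Fin N | w ++ [a] ∈ S}.ncard = k

/-! ### Auxiliary machinery -/

/-- Any two prefixes of a list are comparable. -/
lemma prefTotal {α : Type*} {l1 l2 l3 : List α} (h1 : l1 <+: l3) (h2 : l2 <+: l3) :
    l1 <+: l2 ∨ l2 <+: l1 := by
  rw [List.prefix_iff_eq_take] at h1 h2
  rw [h1, h2]
  rcases le_total l1.length l2.length with h | h
  · exact .inl (List.take_isPrefix_take.2 (.inl h))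
  · exact .inr (List.take_isPrefix_take.2 (.inl h))

/-- An `m`-regular subtree of the `N`-regular tree rooted at the word `w`. -/
def RelReg (N m : ℕ) (w : List (Fin N)) (R : Set (List (Fin N))) : Prop :=
  w ∈ R ∧ (∀ v ∈ R, w <+: v) ∧ (∀ v ∈ R, ∀ u, w <+: u → u <+: v → u ∈ R) ∧
    ∀ v ∈ R, {a : Fin N | v ++ [a] ∈ R}.ncard = m

/-- `w` is a good node: it is in `S` and every `m`-regular subtree rooted at `w`
meets `S` in an infinite set. -/
def Good (N m : ℕ) (S : Set (List (Fin N))) (w : List (Fin N)) : Prop :=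
  w ∈ S ∧ ∀ R, RelReg N m w R → (S ∩ R).Infinite

/-- The full `m`-branching tree below `w` (using the first `m` letters). -/
def Below (N m : ℕ) (w : List (Fin N)) : Set (List (Fin N)) :=
  {v | ∃ u : List (Fin N), v = w ++ u ∧ ∀ x ∈ u, (x : ℕ) < m}

lemma ncard_lt_m {N m : ℕ} (hmN : m ≤ N) : {a : Fin N | (a : ℕ) < m}.ncard = m := by
  have h : {a : Fin N | (a : ℕ) < m} = Set.range (Fin.castLE hmN) := by
    ext a
    constructor
    · intro ha; exact ⟨⟨a, ha⟩, rfl⟩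
    · rintro ⟨b, rfl⟩; exact b.isLt
  rw [h, ← Set.image_univ, Set.ncard_image_of_injective _ (Fin.castLE_injective hmN),
    Set.ncard_univ, Nat.card_eq_fintype_card, Fintype.card_fin]

lemma below_relReg {N m : ℕ} (hmN : m ≤ N) (w : List (Fin N)) :
    RelReg N m w (Below N m w) := by
  refine ⟨⟨[], by simp, by simp⟩, ?_, ?_, ?_⟩
  · rintro v ⟨u, rfl, -⟩; exact List.prefix_append w u
  · rintro v ⟨u, rfl, hall⟩ u' ⟨t, rfl⟩ hpre
    refine ⟨t, rfl, fun x hx => hall x ?_⟩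
    have ht : t <+: u := (List.prefix_append_right_inj w).1 hpre
    exact ht.sublist.subset hx
  · rintro v ⟨u, rfl, hall⟩
    have : {a : Fin N | w ++ u ++ [a] ∈ Below N m w} = {a : Fin N | (a : ℕ) < m} := by
      ext a
      simp only [Set.mem_setOf_eq]
      constructor
      · rintro ⟨u', heq, hall'⟩
        rw [List.append_assoc] at heq
        have : u ++ [a] = u' := List.append_cancel_left heq
        exact hall' a (by rw [← this]; simp)
      · intro ha
        exact ⟨u ++ [a], by simp, by
          intro x hx
          rcases List.mem_append.1 hx with hx | hx
          · exact hall x hx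
          · simp at hx; subst hx; exact ha⟩
    rw [this]; exact ncard_lt_m hmN

lemma good_nil {N m : ℕ} (S : Set (List (Fin N))) (hS : IsSubtree S)
    (h : ∀ R : Set (List (Fin N)), IsRegularSubtree m R → (S ∩ R).Infinite) :
    Good N m S [] := by
  refine ⟨hS.1, fun R hR => h R ⟨⟨hR.1, fun v hv u hu => hR.2.2.1 v hv u u.nil_prefix hu⟩,
    hR.2.2.2⟩⟩

/-- Key lemma: a good node has at least `N - m + 1` good children. -/
lemma good_children {N m : ℕ} (hm1 : 1 ≤ m) (hmN : m ≤ N)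
    (S : Set (List (Fin N))) (hS : IsSubtree S) {w : List (Fin N)}
    (hw : Good N m S w) :
    N - m + 1 ≤ {a : Fin N | Good N m S (w ++ [a])}.ncard := by
  classical
  by_contra hlt
  push_neg at hlt
  -- the set of good children, as a finset
  set G : Finset (Fin N) := Finset.univ.filter (fun a => Good N m S (w ++ [a])) with hG
  have hGset : {a : Fin N | Good N m S (w ++ [a])} = ↑G := by ext a; simp [hG]
  rw [hGset, Set.ncard_coe_finset] at hlt
  set B0 : Finset (Fin N) := Finset.univ.filter (fun a => ¬ Good N m S (w ++ [a])) with hB0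
  have hcards : G.card + B0.card = N := by
    rw [hG, hB0, Finset.card_filter_add_card_filter_not, Finset.card_univ,
      Fintype.card_fin]
  have hmB0 : m ≤ B0.card := by omega
  obtain ⟨B, hBsub, hBcard⟩ := Finset.exists_subset_card_eq hmB0
  -- for each bad child, a witnessing bad subtree
  have hex : ∀ a : Fin N, ∃ R, a ∈ B →
      RelReg N m (w ++ [a]) R ∧ (S ∩ R).Finite := by
    intro a
    by_cases haB : a ∈ B
    · have hbad : ¬ Good N m S (w ++ [a]) := by
        have := hBsub haB
        rw [hB0, Finset.mem_filter] at this
        exact this.2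
      by_cases haS : w ++ [a] ∈ S
      · rw [Good, not_and] at hbad
        push_neg at hbad
        obtain ⟨R, hR1, hR2⟩ := hbad haS
        exact ⟨R, fun _ => ⟨hR1, hR2⟩⟩
      · refine ⟨Below N m (w ++ [a]), fun _ => ⟨below_relReg hmN _, ?_⟩⟩
        have : S ∩ Below N m (w ++ [a]) = ∅ := by
          ext v
          simp only [Set.mem_inter_iff, Set.mem_empty_iff_false, iff_false, not_and]
          rintro hvS ⟨u, rfl, -⟩
          exact haS (hS.2 _ hvS _ (List.prefix_append _ _))
        rw [this]; exact Set.finite_empty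
    · exact ⟨∅, fun h => absurd h haB⟩
  choose F hF using hex
  -- assemble the bad tree rooted at w
  set R : Set (List (Fin N)) := insert w (⋃ a ∈ B, F a) with hRdef
  have hmemFa : ∀ a ∈ B, ∀ v ∈ F a, w ++ [a] <+: v := fun a ha v hv =>
    ((hF a ha).1).2.1 v hv
  have hRel : RelReg N m w R := by
    refine ⟨Set.mem_insert _ _, ?_, ?_, ?_⟩
    · rintro v (rfl | hv)
      · exact List.prefix_refl _
      · simp only [Set.mem_iUnion] at hv
        obtain ⟨a, ha, hv⟩ := hv
        exact (List.prefix_append w [a]).trans (hmemFa a ha v hv)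
    · rintro v (rfl | hv) u hwu huv
      · have : u = v := huv.eq_of_length (le_antisymm huv.length_le hwu.length_le)
        subst this; exact Set.mem_insert _ _
      · simp only [Set.mem_iUnion] at hv
        obtain ⟨a, ha, hv⟩ := hv
        have hwav : w ++ [a] <+: v := hmemFa a ha v hv
        rcases prefTotal huv hwav with hcase | hcase
        · -- u <+: w ++ [a]
          have hlen1 : w.length ≤ u.length := hwu.length_le
          have hlen2 : u.length ≤ w.length + 1 := by
            simpa using hcase.length_le
          rcases Nat.eq_or_lt_of_le hlen2 with heq | hltl
          · have : u = w ++ [a] := hcase.eq_of_length (by simpa using heq)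
            subst this
            exact Set.mem_insert_of_mem _ (Set.mem_biUnion ha (hF a ha).1.1)
          · have : w = u := hwu.eq_of_length (by omega)
            subst this; exact Set.mem_insert _ _
        · -- w ++ [a] <+: u
          exact Set.mem_insert_of_mem _
            (Set.mem_biUnion ha ((hF a ha).1.2.2.1 v hv u hcase huv))
    · rintro v (rfl | hv)
      · have hset : {a : Fin N | v ++ [a] ∈ R} = ↑B := by
          ext b
          simp only [Set.mem_setOf_eq, Finset.coe_mem, Finset.mem_coe]
          constructor
          · rintro (hb | hb)
            · exact absurd (congrArg List.length hb) (by simp)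
            · simp only [Set.mem_iUnion] at hb
              obtain ⟨a, ha, hb⟩ := hb
              have := hmemFa a ha _ hb
              have : [a] <+: [b] := (List.prefix_append_right_inj v).1 this
              have : a = b := by
                have := this.eq_of_length (by simp)
                simpa using this
              subst this; exact ha
          · intro hb
            exact Set.mem_insert_of_mem _ (Set.mem_biUnion hb (hF b hb).1.1)
        rw [hset, Set.ncard_coe_finset, hBcard]
      · simp only [Set.mem_iUnion] at hv
        obtain ⟨a, ha, hv⟩ := hv
        have hwav : w ++ [a] <+: v := hmemFa a ha v hv
        have hlenv : w.length + 1 ≤ v.length := by simpa using hwav.length_le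
        have hset : {b : Fin N | v ++ [b] ∈ R} = {b : Fin N | v ++ [b] ∈ F a} := by
          ext b
          simp only [Set.mem_setOf_eq]
          constructor
          · rintro (hb | hb)
            · exact absurd (congrArg List.length hb) (by simp; omega)
            · simp only [Set.mem_iUnion] at hb
              obtain ⟨a', ha', hb⟩ := hb
              have h1 : w ++ [a'] <+: v ++ [b] := hmemFa a' ha' _ hb
              have h2 : w ++ [a] <+: v ++ [b] := hwav.trans (List.prefix_append v [b])
              have : w ++ [a] = w ++ [a'] := by
                rcases prefTotal h2 h1 with hc | hc
                · exact hc.eq_of_length (by simp)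
                · exact (hc.eq_of_length (by simp)).symm
              have : a = a' := by simpa using List.append_cancel_left this
              subst this; exact hb
          · intro hb
            exact Set.mem_insert_of_mem _ (Set.mem_biUnion ha hb)
        rw [hset]
        exact (hF a ha).1.2.2.2 v hv
  -- but S ∩ R is finite, contradiction
  have hfin : (S ∩ R).Finite := by
    have hsub : S ∩ R ⊆ insert w (⋃ a ∈ B, (S ∩ F a)) := by
      rintro v ⟨hvS, (rfl | hv)⟩
      · exact Set.mem_insert _ _
      · simp only [Set.mem_iUnion] at hv
        obtain ⟨a, ha, hv⟩ := hv
        exact Set.mem_insert_of_mem _ (Set.mem_biUnion ha ⟨hvS, hv⟩)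
    exact Set.Finite.subset (Set.Finite.insert w
      (Set.Finite.biUnion B.finite_toSet (fun a ha => (hF a ha).2))) hsub
  exact (hw.2 R hRel) hfin

open Classical in
/-- A choice of exactly `N - m + 1` good children of `w`. -/
noncomputable def pick (N m : ℕ) (S : Set (List (Fin N))) (w : List (Fin N)) :
    Finset (Fin N) :=
  if hc : N - m + 1 ≤ (Finset.univ.filter (fun a => Good N m S (w ++ [a]))).card then
    (Finset.exists_subset_card_eq hc).choose
  else ∅

lemma pick_spec {N m : ℕ} (hm1 : 1 ≤ m) (hmN : m ≤ N)
    (S : Set (List (Fin N))) (hS : IsSubtree S) {w : List (Fin N)}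
    (hw : Good N m S w) :
    (∀ a ∈ pick N m S w, Good N m S (w ++ [a])) ∧ (pick N m S w).card = N - m + 1 := by
  classical
  have hGset : {a : Fin N | Good N m S (w ++ [a])} =
      ↑(Finset.univ.filter (fun a => Good N m S (w ++ [a]))) := by ext a; simp
  have hc : N - m + 1 ≤ (Finset.univ.filter (fun a => Good N m S (w ++ [a]))).card := by
    have hkey := good_children hm1 hmN S hS hw
    rwa [hGset, Set.ncard_coe_finset] at hkey
  rw [pick, dif_pos hc]
  obtain ⟨hsub, hcard⟩ := (Finset.exists_subset_card_eq hc).choose_spec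
  exact ⟨fun a ha => by simpa using hsub ha, hcard⟩

/-- Membership predicate for the constructed subtree, on reversed words. -/
def Chain (N m : ℕ) (S : Set (List (Fin N))) : List (Fin N) → Prop
  | [] => True
  | a :: t => Chain N m S t ∧ a ∈ pick N m S t.reverse

lemma chain_suffix {N m : ℕ} (S : Set (List (Fin N))) (l r : List (Fin N))
    (h : Chain N m S (l ++ r)) : Chain N m S r := by
  induction l with
  | nil => exact h
  | cons a l ih => exact ih h.1

lemma chain_good {N m : ℕ} (hm1 : 1 ≤ m) (hmN : m ≤ N)
    (S : Set (List (Fin N))) (hS : IsSubtree S)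
    (h : ∀ R : Set (List (Fin N)), IsRegularSubtree m R → (S ∩ R).Infinite) :
    ∀ w : List (Fin N), Chain N m S w.reverse → Good N m S w := by
  intro w
  induction w using List.reverseRecOn with
  | nil => exact fun _ => good_nil S hS h
  | append_singleton u a ih =>
    intro hc
    rw [List.reverse_append] at hc
    simp only [List.reverse_cons, List.reverse_nil, List.nil_append, List.singleton_append] at hc
    obtain ⟨hcu, hpick⟩ := hc
    rw [List.reverse_reverse] at hpick
    exact (pick_spec hm1 hmN S hS (ih hcu)).1 a hpick

theorem stmt10 (N m : ℕ) (hm1 : 1 ≤ m) (hmN : m ≤ N)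
    (S : Set (List (Fin N))) (hS : IsSubtree S)
    (h : ∀ R : Set (List (Fin N)), IsRegularSubtree m R → (S ∩ R).Infinite) :
    ∃ S' ⊆ S, IsRegularSubtree (N - m + 1) S' := by
  refine ⟨{w | Chain N m S w.reverse}, ?_, ⟨⟨trivial, ?_⟩, ?_⟩⟩
  · intro w hw
    exact (chain_good hm1 hmN S hS h w hw).1
  · rintro w hw v ⟨t, rfl⟩
    rw [Set.mem_setOf_eq, List.reverse_append] at hw
    exact chain_suffix S _ _ hw
  · intro w hw
    have hGw : Good N m S w := chain_good hm1 hmN S hS h w hw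
    have hset : {a : Fin N | w ++ [a] ∈ {w | Chain N m S w.reverse}} = ↑(pick N m S w) := by
      ext a
      simp only [Set.mem_setOf_eq, List.reverse_append, List.reverse_cons, List.reverse_nil,
        List.nil_append, List.singleton_append, Finset.mem_coe]
      constructor
      · rintro ⟨-, hp⟩
        rwa [List.reverse_reverse] at hp
      · intro hp
        exact ⟨hw, by rwa [List.reverse_reverse]⟩
    rw [hset, Set.ncard_coe_finset]
    exact (pick_spec hm1 hmN S hS hGw).2
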